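/- Let α > -1, n ≥ 2, and H = A_n²(𝔻, μ_α) the space of n-analytic functions on the unit disk square-integrable with respect to μ_α. Then the set of Toeplitz operators {T_a : a ∈ L^∞(𝔻)}, where T_a f = P_H(a f) and P_H is the orthogonal projection of L²(𝔻, μ_α) onto H, is not dense in B(H) in the weak operator topology. -/

import Mathlib

open MeasureTheory Finset
open scoped InnerProductSpace

/-- The open unit disk in the complex plane. -/
def unitDisk : Set ℂ := {z : ℂ | ‖z‖ < 1}

/-- The normalized weighted Lebesgue measure on the unit disk. -/
noncomputable def muAlpha (α : ℝ) : Measure ℂ :=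
  ((volume : Measure ℂ).restrict unitDisk).withDensity
    fun z => ENNReal.ofReal ((α + 1) / Real.pi * (1 - ‖z‖ ^ 2) ^ α)

/-- f is n-analytic on U. -/
def PolyAnalyticOn (n : ℕ) (f : ℂ → ℂ) (U : Set ℂ) : Prop :=
  ∃ g : ℕ → ℂ → ℂ, (∀ k < n, DifferentiableOn ℂ (g k) U) ∧
    ∀ z ∈ U, f z = ∑ k ∈ Finset.range n, g k z * (starRingEnd ℂ z) ^ k

/-- The weighted Bergman space of n-analytic functions on the unit disk,
as a closed subspace of L²(𝔻, μ_α). -/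
noncomputable def bergmanSubmodule (α : ℝ) (n : ℕ) : Submodule ℂ (Lp ℂ 2 (muAlpha α)) :=
  (Submodule.span ℂ
    {g : Lp ℂ 2 (muAlpha α) | ∃ (f : ℂ → ℂ) (_ : PolyAnalyticOn n f unitDisk)
      (hm : MemLp f 2 (muAlpha α)), g = hm.toLp f}).topologicalClosure

section auxiliary
open Set
variable {α : ℝ}

lemma unitDisk_eq_ball : unitDisk = Metric.ball (0:ℂ) 1 := by
  ext z; simp [unitDisk, Metric.mem_ball, Complex.dist_eq]

lemma measurableSet_unitDisk : MeasurableSet unitDisk := by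
  rw [unitDisk_eq_ball]; exact Metric.isOpen_ball.measurableSet

lemma measurable_rpow_const (α : ℝ) : Measurable fun x : ℝ => x ^ α :=
  measurable_id.pow measurable_const

lemma measurable_dens (α : ℝ) :
    Measurable fun z : ℂ => ENNReal.ofReal ((α + 1) / Real.pi * (1 - ‖z‖ ^ 2) ^ α) := by
  apply Measurable.ennreal_ofReal
  exact measurable_const.mul (((measurable_const.sub
    ((continuous_norm.measurable).pow measurable_const)).pow measurable_const))

lemma muAlpha_compl_disk (α : ℝ) : muAlpha α unitDiskᶜ = 0 := by
  rw [muAlpha, withDensity_apply _ measurableSet_unitDisk.compl]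
  rw [Measure.restrict_restrict measurableSet_unitDisk.compl]
  simp [Set.compl_inter_self]

lemma ae_mem_unitDisk (α : ℝ) : ∀ᵐ z ∂(muAlpha α), z ∈ unitDisk := by
  rw [ae_iff]
  exact muAlpha_compl_disk α

lemma one_sub_sq_rpow_le (hr0 : (0:ℝ) ≤ r) (hr1 : r ≤ 1) :
    (1 - r^2) ^ α ≤ max 1 (2 ^ α) * (1 - r) ^ α := by
  have h1 : (0:ℝ) ≤ 1 - r := by linarith
  have h2 : (0:ℝ) ≤ 1 + r := by linarith
  have hfact : 1 - r^2 = (1 - r) * (1 + r) := by ring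
  rw [hfact, Real.mul_rpow h1 h2, mul_comm]
  apply mul_le_mul_of_nonneg_right _ (Real.rpow_nonneg h1 α)
  rcases le_or_gt 0 α with hα | hα
  · exact le_max_of_le_right (Real.rpow_le_rpow h2 (by linarith) hα)
  · exact le_max_of_le_left (Real.rpow_le_one_of_one_le_of_nonpos (by linarith) hα.le)

lemma phi_intervalIntegrable (hα : -1 < α) (c : ℝ) (hc : 0 ≤ c) :
    IntervalIntegrable (fun r : ℝ => r * (c * (1 - r^2) ^ α)) volume 0 1 := by
  have hbase : IntervalIntegrable (fun x : ℝ => x ^ α) volume 0 1 :=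
    intervalIntegral.intervalIntegrable_rpow' hα
  have hsub : IntervalIntegrable (fun x : ℝ => (1 - x) ^ α) volume 0 1 := by
    have := (hbase.comp_sub_left 1)
    simpa using this.symm
  have hψ : IntervalIntegrable (fun x : ℝ => (c * max 1 (2 ^ α)) * (1 - x) ^ α) volume 0 1 :=
    hsub.const_mul _
  apply hψ.mono_fun
  · exact ((measurable_id.mul (measurable_const.mul ((measurable_const.sub
      (measurable_id.pow measurable_const)).pow measurable_const)))).aestronglyMeasurable
  · rw [Set.uIoc_of_le (by norm_num : (0:ℝ) ≤ 1)]
    refine (ae_restrict_iff' measurableSet_Ioc).2 (Filter.Eventually.of_forall ?_)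
    intro r hr
    have hr0 : (0:ℝ) ≤ r := hr.1.le
    have hr1 : r ≤ 1 := hr.2
    have h1 : (0:ℝ) ≤ 1 - r := by linarith
    have hK : (0:ℝ) ≤ max 1 (2 ^ α) := le_trans zero_le_one (le_max_left _ _)
    have hnn : 0 ≤ r * (c * (1 - r^2) ^ α) := by
      apply mul_nonneg hr0 (mul_nonneg hc (Real.rpow_nonneg (by nlinarith) α))
    have hnn2 : 0 ≤ (c * max 1 (2 ^ α)) * (1 - r) ^ α :=
      mul_nonneg (mul_nonneg hc hK) (Real.rpow_nonneg h1 α)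
    show ‖r * (c * (1 - r^2) ^ α)‖ ≤ ‖(c * max 1 (2 ^ α)) * (1 - r) ^ α‖
    rw [Real.norm_eq_abs, Real.norm_eq_abs, abs_of_nonneg hnn, abs_of_nonneg hnn2]
    calc r * (c * (1 - r^2) ^ α) ≤ 1 * (c * (1 - r^2) ^ α) := by
          apply mul_le_mul_of_nonneg_right hr1
            (mul_nonneg hc (Real.rpow_nonneg (by nlinarith) α))
      _ = c * (1 - r^2) ^ α := one_mul _
      _ ≤ c * (max 1 (2 ^ α) * (1 - r) ^ α) :=
          mul_le_mul_of_nonneg_left (one_sub_sq_rpow_le hr0 hr1) hc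
      _ = (c * max 1 (2 ^ α)) * (1 - r) ^ α := by ring

lemma phi_lintegral_lt_top (hα : -1 < α) (c : ℝ) (hc : 0 ≤ c) :
    ∫⁻ r in Ioo (0:ℝ) 1, ENNReal.ofReal (r * (c * (1 - r^2) ^ α)) < ⊤ := by
  have hI : IntegrableOn (fun r : ℝ => r * (c * (1 - r^2) ^ α)) (Ioo 0 1) volume := by
    have h := (phi_intervalIntegrable hα c hc).1
    have h2 : IntegrableOn (fun r : ℝ => r * (c * (1 - r^2) ^ α)) (Set.Ioc 0 1) volume := by
      exact h
    exact h2.mono_set Set.Ioo_subset_Ioc_self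
  have := hI.2
  refine lt_of_le_of_lt (lintegral_mono fun r => ?_) this
  rw [← ofReal_norm_eq_enorm]
  exact ENNReal.ofReal_le_ofReal (le_abs_self _)


theorem muAlpha_univ_lt_top {α : ℝ} (hα : -1 < α) : muAlpha α Set.univ < ⊤ := by
  set c : ℝ := (α + 1) / Real.pi with hc_def
  have hc : 0 ≤ c := by
    apply div_nonneg (by linarith) Real.pi_pos.le
  set D : ℂ → ENNReal := fun z => ENNReal.ofReal (c * (1 - ‖z‖ ^ 2) ^ α) with hD_def
  set g : ℝ × ℝ → ENNReal := fun p => ENNReal.ofReal (c * (1 - (p.1^2 + p.2^2)) ^ α) with hg_def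
  set Bset : Set (ℝ × ℝ) := {p | p.1^2 + p.2^2 < 1} with hB_def
  have hBmeas : MeasurableSet Bset :=
    (isOpen_lt (by fun_prop) continuous_const).measurableSet
  have hgmeas : Measurable g := by
    apply Measurable.ennreal_ofReal
    exact measurable_const.mul ((measurable_const.sub (by fun_prop)).pow measurable_const)
  have step1 : muAlpha α Set.univ = ∫⁻ z in unitDisk, D z ∂(volume : Measure ℂ) := by
    rw [muAlpha, withDensity_apply _ MeasurableSet.univ, Measure.restrict_univ]
  have key : ∀ z : ℂ, unitDisk.indicator D z = Bset.indicator g (Complex.measurableEquivRealProd z) := by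
    intro z
    have habs : ‖z‖ ^ 2 = z.re^2 + z.im^2 := by
      rw [Complex.sq_norm, Complex.normSq_apply]; ring
    have hmem : z ∈ unitDisk ↔ (Complex.measurableEquivRealProd z) ∈ Bset := by
      simp only [unitDisk, Bset, Complex.measurableEquivRealProd_apply, Set.mem_setOf_eq]
      rw [← habs]
      constructor
      · intro h; nlinarith [norm_nonneg z]
      · intro h; nlinarith [norm_nonneg z]
    by_cases hz : z ∈ unitDisk
    · rw [Set.indicator_of_mem hz, Set.indicator_of_mem (hmem.1 hz)]
      simp only [D, g, Complex.measurableEquivRealProd_apply, habs]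
    · rw [Set.indicator_of_notMem hz, Set.indicator_of_notMem (fun h => hz (hmem.2 h))]
  have step2 : ∫⁻ z in unitDisk, D z ∂(volume : Measure ℂ)
      = ∫⁻ p in Bset, g p ∂(volume : Measure (ℝ × ℝ)) := by
    rw [← lintegral_indicator measurableSet_unitDisk, ← lintegral_indicator hBmeas]
    calc ∫⁻ z, unitDisk.indicator D z ∂(volume : Measure ℂ)
        = ∫⁻ z, Bset.indicator g (Complex.measurableEquivRealProd z) ∂(volume : Measure ℂ) := by
          simp_rw [key]
      _ = ∫⁻ p, Bset.indicator g p ∂(volume : Measure (ℝ × ℝ)) := by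
          exact Complex.volume_preserving_equiv_real_prod.lintegral_comp
            (hgmeas.indicator hBmeas)
  -- polar coordinates
  set s : Set (ℝ × ℝ) := Ioo (0:ℝ) 1 ×ˢ Ioo (-Real.pi) Real.pi with hs_def
  have hsmeas : MeasurableSet s := measurableSet_Ioo.prod measurableSet_Ioo
  set N : Set (ℝ × ℝ) := Set.univ ×ˢ ({0} : Set ℝ) with hN_def
  have hNnull : (volume : Measure (ℝ × ℝ)) N = 0 := by
    rw [hN_def, Measure.volume_eq_prod, Measure.prod_prod, Real.volume_singleton, mul_zero]
  have hBsub : Bset ⊆ (polarCoord.symm '' s) ∪ N := by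
    intro p hp
    by_cases hp2 : p.2 = 0
    · exact Or.inr (Set.mem_prod.2 ⟨trivial, hp2⟩)
    · left
      have hsrc : p ∈ polarCoord.source := Or.inr hp2
      refine ⟨polarCoord p, ?_, polarCoord.left_inv hsrc⟩
      have htgt := polarCoord.map_source hsrc
      rw [polarCoord_target] at htgt
      refine ⟨⟨htgt.1, ?_⟩, htgt.2⟩
      show (polarCoord p).1 < 1
      have h1 : (polarCoord p).1 = Real.sqrt (p.1^2 + p.2^2) := rfl
      rw [h1]
      have hplt : p.1^2 + p.2^2 < 1 := hp
      nlinarith [Real.sq_sqrt (by positivity : (0:ℝ) ≤ p.1^2 + p.2^2),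
        Real.sqrt_nonneg (p.1^2 + p.2^2)]
  have step3 : ∫⁻ p in Bset, g p ∂(volume : Measure (ℝ × ℝ))
      ≤ ∫⁻ p in polarCoord.symm '' s, g p ∂(volume : Measure (ℝ × ℝ)) := by
    calc ∫⁻ p in Bset, g p ∂(volume : Measure (ℝ × ℝ))
        ≤ ∫⁻ p in (polarCoord.symm '' s) ∪ N, g p ∂(volume : Measure (ℝ × ℝ)) :=
          lintegral_mono_set hBsub
      _ ≤ (∫⁻ p in polarCoord.symm '' s, g p ∂(volume : Measure (ℝ × ℝ)))
            + ∫⁻ p in N, g p ∂(volume : Measure (ℝ × ℝ)) := lintegral_union_le _ _ _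
      _ = ∫⁻ p in polarCoord.symm '' s, g p ∂(volume : Measure (ℝ × ℝ)) := by
          rw [setLIntegral_measure_zero _ _ hNnull, add_zero]
  -- change of variables
  set B' : ℝ × ℝ → ℝ × ℝ →L[ℝ] ℝ × ℝ := fun p =>
    LinearMap.toContinuousLinearMap (Matrix.toLin (Module.Basis.finTwoProd ℝ) (Module.Basis.finTwoProd ℝ)
      !![Real.cos p.2, -p.1 * Real.sin p.2; Real.sin p.2, p.1 * Real.cos p.2]) with hB'_def
  have hB'det : ∀ p : ℝ × ℝ, (B' p).det = p.1 := by
    intro p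
    conv_rhs => rw [← one_mul p.1, ← Real.cos_sq_add_sin_sq p.2]
    simp only [B', neg_mul, LinearMap.det_toContinuousLinearMap, LinearMap.det_toLin,
      Matrix.det_fin_two_of, sub_neg_eq_add]
    ring
  have hf' : ∀ x ∈ s, HasFDerivWithinAt polarCoord.symm (B' x) s x := fun x _ =>
    (hasFDerivAt_polarCoord_symm x).hasFDerivWithinAt
  have hinj : Set.InjOn polarCoord.symm s := by
    apply polarCoord.symm.injOn.mono
    rw [OpenPartialHomeomorph.symm_source, polarCoord_target]
    exact Set.prod_mono Set.Ioo_subset_Ioi_self subset_rfl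
  have step4 : ∫⁻ p in polarCoord.symm '' s, g p ∂(volume : Measure (ℝ × ℝ))
      = ∫⁻ p in s, ENNReal.ofReal |(B' p).det| * g (polarCoord.symm p)
          ∂(volume : Measure (ℝ × ℝ)) :=
    lintegral_image_eq_lintegral_abs_det_fderiv_mul volume hsmeas hf' hinj g
  have step5 : ∫⁻ p in s, ENNReal.ofReal |(B' p).det| * g (polarCoord.symm p)
          ∂(volume : Measure (ℝ × ℝ))
      = ∫⁻ p in s, ENNReal.ofReal (p.1 * (c * (1 - p.1^2) ^ α))
          ∂(volume : Measure (ℝ × ℝ)) := by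
    apply setLIntegral_congr_fun hsmeas
    rintro ⟨r, θ⟩ ⟨hr, hθ⟩
    have hr0 : (0:ℝ) < r := hr.1
    have hsumsq : (r * Real.cos θ)^2 + (r * Real.sin θ)^2 = r^2 := by
      have := Real.sin_sq_add_cos_sq θ; nlinarith
    have hsymm : polarCoord.symm (r, θ) = (r * Real.cos θ, r * Real.sin θ) := rfl
    dsimp only
    rw [hB'det, abs_of_pos hr0, hsymm]
    simp only [g]
    rw [hsumsq, ← ENNReal.ofReal_mul hr0.le]
  have step6 : ∫⁻ p in s, ENNReal.ofReal (p.1 * (c * (1 - p.1^2) ^ α))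
          ∂(volume : Measure (ℝ × ℝ))
      = (∫⁻ r in Ioo (0:ℝ) 1, ENNReal.ofReal (r * (c * (1 - r^2) ^ α)))
          * ENNReal.ofReal (Real.pi - -Real.pi) := by
    rw [hs_def, Measure.volume_eq_prod, ← Measure.prod_restrict]
    have hFmeas : Measurable fun p : ℝ × ℝ => ENNReal.ofReal (p.1 * (c * (1 - p.1^2) ^ α)) := by
      apply Measurable.ennreal_ofReal
      exact measurable_fst.mul (measurable_const.mul
        ((measurable_const.sub (measurable_fst.pow measurable_const)).pow measurable_const))
    rw [lintegral_prod _ hFmeas.aemeasurable]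
    simp_rw [lintegral_const, Measure.restrict_apply MeasurableSet.univ, Set.univ_inter,
      Real.volume_Ioo]
    rw [← lintegral_mul_const]
    exact Measurable.ennreal_ofReal <| measurable_id.mul (measurable_const.mul
      ((measurable_const.sub (measurable_id.pow measurable_const)).pow measurable_const))
  have fin : (∫⁻ r in Ioo (0:ℝ) 1, ENNReal.ofReal (r * (c * (1 - r^2) ^ α)))
      * ENNReal.ofReal (Real.pi - -Real.pi) < ⊤ :=
    ENNReal.mul_lt_top (phi_lintegral_lt_top hα c hc) ENNReal.ofReal_lt_top
  rw [step1, step2]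
  calc ∫⁻ p in Bset, g p ∂(volume : Measure (ℝ × ℝ))
      ≤ _ := step3
    _ < ⊤ := by rw [step4, step5, step6]; exact fin

lemma volume_pos_of_muAlpha {α : ℝ} (hα : -1 < α) {A : Set ℂ} (hA : MeasurableSet A)
    (hsub : A ⊆ unitDisk) (h0 : muAlpha α A = 0) : (volume : Measure ℂ) A = 0 := by
  rw [muAlpha, withDensity_apply _ hA, Measure.restrict_restrict hA,
    Set.inter_eq_self_of_subset_left hsub] at h0
  rw [setLIntegral_eq_zero_iff hA (measurable_dens α)] at h0
  have : ∀ᵐ z ∂(volume : Measure ℂ), z ∉ A := by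
    filter_upwards [h0] with z hz
    intro hzA
    have hz1 : ‖z‖ < 1 := hsub hzA
    have hpos : 0 < (α + 1) / Real.pi * (1 - ‖z‖ ^ 2) ^ α := by
      apply mul_pos (div_pos (by linarith) Real.pi_pos)
      apply Real.rpow_pos_of_pos
      nlinarith [norm_nonneg z]
    exact (ENNReal.ofReal_pos.2 hpos).ne' (hz hzA)
  have h2 : (volume : Measure ℂ) {z | ¬ z ∉ A} = 0 := ae_iff.1 this
  refine le_antisymm (le_of_le_of_eq (measure_mono ?_) h2) bot_le
  intro z hz; simpa using hz

lemma not_ae_line {α : ℝ} (hα : -1 < α) (L : Submodule ℝ ℂ) (hL : L ≠ ⊤) :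
    ¬ (∀ᵐ z ∂(muAlpha α), z ∈ (L : Set ℂ)) := by
  intro h
  have hLnull : (volume : Measure ℂ) (L : Set ℂ) = 0 := Measure.addHaar_submodule _ L hL
  have hmeasL : MeasurableSet (L : Set ℂ) := by
    have : IsClosed (L : Set ℂ) := Submodule.closed_of_finiteDimensional L
    exact this.measurableSet
  set A : Set ℂ := unitDisk \ L with hA_def
  have hAmeas : MeasurableSet A := measurableSet_unitDisk.diff hmeasL
  have hAsub : A ⊆ unitDisk := Set.diff_subset
  have hAnull : muAlpha α A = 0 := by
    have : A ⊆ {z | ¬ z ∈ (L : Set ℂ)} := fun z hz => hz.2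
    exact le_antisymm (le_of_le_of_eq (measure_mono this) (ae_iff.1 h)) bot_le
  have := volume_pos_of_muAlpha hα hAmeas hAsub hAnull
  have hdisk : (volume : Measure ℂ) unitDisk ≠ 0 := by
    rw [unitDisk_eq_ball]
    exact (Metric.measure_ball_pos _ _ one_pos).ne'
  apply hdisk
  apply le_antisymm _ bot_le
  have hcover : unitDisk ⊆ A ∪ (L : Set ℂ) := by
    intro z hz
    by_cases hzL : z ∈ (L : Set ℂ)
    · exact Or.inr hzL
    · exact Or.inl ⟨hz, hzL⟩
  calc (volume : Measure ℂ) unitDisk ≤ volume A + volume (L : Set ℂ) :=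
        le_trans (measure_mono hcover) (measure_union_le _ _)
    _ = 0 := by rw [this, hLnull, add_zero]

end auxiliary

section bergmanLemmas
variable {α : ℝ} {n : ℕ}

lemma memL2_id (hα : -1 < α) : MemLp (fun z : ℂ => z) 2 (muAlpha α) := by
  haveI : IsFiniteMeasure (muAlpha α) := ⟨muAlpha_univ_lt_top hα⟩
  apply MemLp.of_bound continuous_id.aestronglyMeasurable 1
  filter_upwards [ae_mem_unitDisk α] with z hz
  simpa using le_of_lt hz

lemma memL2_conj (hα : -1 < α) : MemLp (fun z : ℂ => starRingEnd ℂ z) 2 (muAlpha α) := by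
  haveI : IsFiniteMeasure (muAlpha α) := ⟨muAlpha_univ_lt_top hα⟩
  apply MemLp.of_bound (Complex.continuous_conj.aestronglyMeasurable) 1
  filter_upwards [ae_mem_unitDisk α] with z hz
  simpa using le_of_lt hz

lemma polyAnalyticOn_id (hn : 2 ≤ n) : PolyAnalyticOn n (fun z => z) unitDisk := by
  refine ⟨fun k => if k = 0 then (fun z => z) else 0, ?_, ?_⟩
  · intro k _
    by_cases hk : k = 0
    · simp only [hk, if_pos]; exact differentiableOn_id
    · simp [hk]
  · intro z _
    rw [Finset.sum_eq_single 0]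
    · simp
    · intro k _ hk; simp [hk]
    · intro h0
      exact absurd (Finset.mem_range.2 (by omega : 0 < n)) h0

lemma polyAnalyticOn_conj (hn : 2 ≤ n) : PolyAnalyticOn n (fun z => starRingEnd ℂ z) unitDisk := by
  refine ⟨fun k => if k = 1 then (fun _ => 1) else 0, ?_, ?_⟩
  · intro k _
    by_cases hk : k = 1
    · simp only [hk, if_pos]; exact differentiableOn_const 1
    · simp [hk]
  · intro z _
    rw [Finset.sum_eq_single 1]
    · simp
    · intro k _ hk; simp [hk]
    · intro h0
      exact absurd (Finset.mem_range.2 (by omega : 1 < n)) h0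

lemma mem_bergman {f : ℂ → ℂ} (hpa : PolyAnalyticOn n f unitDisk)
    (hm : MemLp f 2 (muAlpha α)) : hm.toLp f ∈ bergmanSubmodule α n :=
  Submodule.le_topologicalClosure _ (Submodule.subset_span ⟨f, hpa, hm, rfl⟩)

lemma e1_ne_zero (hα : -1 < α) : (memL2_id hα).toLp (fun z : ℂ => z) ≠ 0 := by
  intro h
  apply not_ae_line hα ⊥ bot_ne_top
  have h1 := (memL2_id hα).coeFn_toLp
  rw [h] at h1
  filter_upwards [h1.symm, Lp.coeFn_zero ℂ 2 (muAlpha α)] with z hz hz0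
  rw [SetLike.mem_coe, Submodule.mem_bot]
  exact hz.trans hz0 |>.symm ▸ rfl

lemma not_parallel (hα : -1 < α) (r : ℂ) :
    (memL2_conj hα).toLp (fun z : ℂ => starRingEnd ℂ z)
      ≠ r • (memL2_id hα).toLp (fun z : ℂ => z) := by
  intro h
  set L : Submodule ℝ ℂ :=
    LinearMap.ker (Complex.conjAe.toLinearMap - r • (LinearMap.id : ℂ →ₗ[ℝ] ℂ)) with hL_def
  have hmem : ∀ z : ℂ, z ∈ L ↔ starRingEnd ℂ z = r * z := by
    intro z
    simp only [L, LinearMap.mem_ker, LinearMap.sub_apply, LinearMap.smul_apply, LinearMap.id_apply,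
      AlgEquiv.toLinearMap_apply, Complex.conjAe_coe, sub_eq_zero, smul_eq_mul]
  have hL : L ≠ ⊤ := by
    intro htop
    have h1 : (1:ℂ) ∈ L := htop ▸ Submodule.mem_top
    have hI : Complex.I ∈ L := htop ▸ Submodule.mem_top
    rw [hmem] at h1 hI
    simp at h1
    rw [← h1] at hI
    simp [Complex.conj_I] at hI
    exact Complex.I_ne_zero (by linear_combination (-1/2 : ℂ) * hI)
  apply not_ae_line hα L hL
  have h1 := (memL2_conj hα).coeFn_toLp
  rw [h] at h1
  filter_upwards [h1.symm, Lp.coeFn_smul r ((memL2_id hα).toLp (fun z : ℂ => z)),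
    (memL2_id hα).coeFn_toLp] with z hz hsmul hid
  rw [SetLike.mem_coe, hmem]
  calc starRingEnd ℂ z = _ := hz
    _ = r • ((memL2_id hα).toLp (fun z : ℂ => z) : ℂ → ℂ) z := hsmul
    _ = r * z := by rw [hid]; rfl
end bergmanLemmas

/-- The set of Toeplitz operators with bounded symbols, acting on the n-analytic
weighted Bergman space of the unit disk (n ≥ 2), is not dense in the space of
bounded operators with the weak operator topology. -/
theorem toeplitz_not_weakly_dense (α : ℝ) (hα : -1 < α) (n : ℕ) (hn : 2 ≤ n) :
    ¬ Dense
      ((ContinuousLinearMapWOT.ofCLM : ((bergmanSubmodule α n) →L[ℂ] (bergmanSubmodule α n)) →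
          ContinuousLinearMapWOT (RingHom.id ℂ) (bergmanSubmodule α n) (bergmanSubmodule α n)) ''
        {S : (bergmanSubmodule α n) →L[ℂ] (bergmanSubmodule α n) |
          ∃ a : ℂ → ℂ, Measurable a ∧ (∃ C : ℝ, ∀ z, ‖a z‖ ≤ C) ∧
            ∀ f g : bergmanSubmodule α n,
              ⟪(g : Lp ℂ 2 (muAlpha α)), ((S f : bergmanSubmodule α n) : Lp ℂ 2 (muAlpha α))⟫_ℂ
                = ∫ z, a z * ((f : Lp ℂ 2 (muAlpha α)) : ℂ → ℂ) z *
                    starRingEnd ℂ (((g : Lp ℂ 2 (muAlpha α)) : ℂ → ℂ) z) ∂(muAlpha α)}) := by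
  intro hD
  set E1 : bergmanSubmodule α n := ⟨(memL2_id hα).toLp (fun z : ℂ => z),
    mem_bergman (polyAnalyticOn_id hn) (memL2_id hα)⟩ with hE1_def
  set E2 : bergmanSubmodule α n := ⟨(memL2_conj hα).toLp (fun z : ℂ => starRingEnd ℂ z),
    mem_bergman (polyAnalyticOn_conj hn) (memL2_conj hα)⟩ with hE2_def
  set Φ : (bergmanSubmodule α n →WOT[ℂ] bergmanSubmodule α n) → ℂ := fun A =>
    (innerSL ℂ E1) (A E1) - (innerSL ℂ E2) (A E2) with hΦ_def
  have hΦcont : Continuous Φ :=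
    (ContinuousLinearMapWOT.continuous_dual_apply E1 (innerSL ℂ E1)).sub
      (ContinuousLinearMapWOT.continuous_dual_apply E2 (innerSL ℂ E2))
  have hCclosed : IsClosed {A : bergmanSubmodule α n →WOT[ℂ] bergmanSubmodule α n | Φ A = 0} :=
    isClosed_singleton.preimage hΦcont
  have himg : ((ContinuousLinearMapWOT.ofCLM : ((bergmanSubmodule α n) →L[ℂ] (bergmanSubmodule α n)) →
          ContinuousLinearMapWOT (RingHom.id ℂ) (bergmanSubmodule α n) (bergmanSubmodule α n)) ''
        {S : (bergmanSubmodule α n) →L[ℂ] (bergmanSubmodule α n) |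
          ∃ a : ℂ → ℂ, Measurable a ∧ (∃ C : ℝ, ∀ z, ‖a z‖ ≤ C) ∧
            ∀ f g : bergmanSubmodule α n,
              ⟪(g : Lp ℂ 2 (muAlpha α)), ((S f : bergmanSubmodule α n) : Lp ℂ 2 (muAlpha α))⟫_ℂ
                = ∫ z, a z * ((f : Lp ℂ 2 (muAlpha α)) : ℂ → ℂ) z *
                    starRingEnd ℂ (((g : Lp ℂ 2 (muAlpha α)) : ℂ → ℂ) z) ∂(muAlpha α)})
      ⊆ {A : bergmanSubmodule α n →WOT[ℂ] bergmanSubmodule α n | Φ A = 0} := by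
    rintro A ⟨S, ⟨a, hameas, hbound, hform⟩, rfl⟩
    show Φ (ContinuousLinearMapWOT.ofCLM S) = 0
    simp only [hΦ_def, ContinuousLinearMap.toWOT_apply, innerSL_apply_apply]
    rw [sub_eq_zero]
    have h1 := hform E1 E1
    have h2 := hform E2 E2
    rw [Submodule.coe_inner, Submodule.coe_inner, h1, h2]
    have hco1 : ((E1 : Lp ℂ 2 (muAlpha α)) : ℂ → ℂ) =ᶠ[ae (muAlpha α)] fun z => z :=
      (memL2_id hα).coeFn_toLp
    have hco2 : ((E2 : Lp ℂ 2 (muAlpha α)) : ℂ → ℂ)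
        =ᶠ[ae (muAlpha α)] fun z => starRingEnd ℂ z :=
      (memL2_conj hα).coeFn_toLp
    apply integral_congr_ae
    filter_upwards [hco1, hco2] with z hz1 hz2
    rw [hz1, hz2, Complex.conj_conj]
    ring
  have hall : ∀ A, Φ A = 0 := fun A => hCclosed.closure_subset_iff.2 himg (hD A)
  -- now derive a contradiction
  have hE1ne : E1 ≠ 0 := by
    intro h
    apply e1_ne_zero hα
    have := congrArg (Subtype.val) h
    simpa [hE1_def] using this
  have hE2ne : E2 ≠ 0 := by
    intro h
    apply not_parallel hα 0
    have := congrArg (Subtype.val) h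
    rw [zero_smul]
    simpa [hE2_def] using this
  have hnorm : ‖E2‖ = ‖E1‖ := by
    show ‖(E2 : Lp ℂ 2 (muAlpha α))‖ = ‖(E1 : Lp ℂ 2 (muAlpha α))‖
    rw [hE1_def, hE2_def]
    simp only [Submodule.coe_mk]
    rw [Lp.norm_toLp, Lp.norm_toLp]
    congr 1
    apply eLpNorm_congr_norm_ae
    apply Filter.Eventually.of_forall
    intro z
    simp [Complex.norm_conj]
  have hCS : ‖⟪E1, E2⟫_ℂ‖ < ‖E1‖ * ‖E2‖ := by
    rcases lt_or_eq_of_le (norm_inner_le_norm (𝕜 := ℂ) E1 E2) with h | h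
    · exact h
    · exfalso
      obtain ⟨r, hr0, hE2eq⟩ := (norm_inner_eq_norm_iff hE1ne hE2ne).1 h
      apply not_parallel hα r
      have := congrArg (Subtype.val) hE2eq
      simpa using this
  have h0 := hall (ContinuousLinearMapWOT.ofCLM ((innerSL ℂ E1).smulRight E1))
  simp only [hΦ_def, ContinuousLinearMap.toWOT_apply, ContinuousLinearMap.smulRight_apply,
    innerSL_apply_apply, inner_smul_right] at h0
  rw [sub_eq_zero] at h0
  have hnA : ‖⟪E1, E1⟫_ℂ * ⟪E1, E1⟫_ℂ‖ = ‖E1‖^4 := by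
    rw [inner_self_eq_norm_sq_to_K (𝕜 := ℂ) E1]
    simp only [norm_mul, norm_pow, Complex.norm_real, RCLike.norm_ofReal, Real.norm_eq_abs, abs_norm]
    ring
  have hnB : ‖⟪E1, E2⟫_ℂ * ⟪E2, E1⟫_ℂ‖ = ‖⟪E1, E2⟫_ℂ‖^2 := by
    rw [norm_mul, ← norm_inner_symm E1 E2]
    ring
  have hlt : ‖⟪E1, E2⟫_ℂ‖^2 < ‖E1‖^4 := by
    calc ‖⟪E1, E2⟫_ℂ‖^2 < (‖E1‖ * ‖E2‖)^2 :=
          pow_lt_pow_left₀ hCS (norm_nonneg _) (by norm_num)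
      _ = ‖E1‖^4 := by rw [hnorm]; ring
  rw [← h0, hnA] at hnB
  exact absurd hnB.symm (ne_of_lt hlt)
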